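/- Let p ≥ 3 be prime, m = 6p² − 6p + 1, and let g(k) = 2pk + (k²)_p. Define A'' ∈ C^{m×p} with entries A''_{j,k} = exp(i 2π j g(k) / m) for j ∈ [0:m−1], k ∈ [0:p−1]. Then for every x ∈ C^p, ||A'' x||_2^2 = m ||x||_2^2 and ||A'' x||_4^4 = 2m ||x||_2^4 − m ||x||_4^4. -/

import Mathlib

open Complex Finset

/-- The character value `exp(2πi d j / m)`. -/
noncomputable def FF (m : ℕ) (j : Fin m) (d : ℤ) : ℂ :=
  Complex.exp (2 * (Real.pi : ℂ) * Complex.I * d * j / m)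

lemma FF_mul (m : ℕ) (j : Fin m) (a b : ℤ) : FF m j a * FF m j b = FF m j (a + b) := by
  rw [FF, FF, FF, ← Complex.exp_add]
  congr 1
  push_cast
  ring

lemma FF_conj (m : ℕ) (j : Fin m) (d : ℤ) : (starRingEnd ℂ) (FF m j d) = FF m j (-d) := by
  rw [FF, FF, ← Complex.exp_conj]
  congr 1
  simp only [map_div₀, map_mul, Complex.conj_I, Complex.conj_ofReal, map_intCast,
    map_natCast, map_ofNat]
  push_cast
  ring

lemma sum_FF (m : ℕ) (hm : 0 < m) (d : ℤ) :
    ∑ j : Fin m, FF m j d = if (m : ℤ) ∣ d then (m : ℂ) else 0 := by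
  have hm0 : (m : ℂ) ≠ 0 := by exact_mod_cast hm.ne'
  have hπ : (2 * (Real.pi : ℂ) * Complex.I) ≠ 0 := by
    simp [Real.pi_ne_zero, Complex.I_ne_zero]
  set z : ℂ := Complex.exp (2 * (Real.pi : ℂ) * Complex.I * d / m) with hz
  have hpow : ∀ j : Fin m, FF m j d = z ^ (j : ℕ) := by
    intro j
    rw [FF, hz, ← Complex.exp_nat_mul]
    congr 1
    ring
  have hzm : z ^ m = 1 := by
    rw [hz, ← Complex.exp_nat_mul]
    rw [show (m : ℂ) * (2 * (Real.pi : ℂ) * Complex.I * d / m) = d * (2 * (Real.pi : ℂ) * Complex.I) by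
      field_simp]
    exact Complex.exp_int_mul_two_pi_mul_I d
  have hz1 : z = 1 ↔ (m : ℤ) ∣ d := by
    rw [hz, Complex.exp_eq_one_iff]
    constructor
    · rintro ⟨n, hn⟩
      refine ⟨n, ?_⟩
      have h2 : (d : ℂ) * (2 * (Real.pi : ℂ) * Complex.I)
          = ((m : ℂ) * n) * (2 * (Real.pi : ℂ) * Complex.I) := by
        field_simp at hn
        linear_combination (2 * (Real.pi : ℂ) * Complex.I) * hn
      have : (d : ℂ) = (m : ℂ) * n := mul_right_cancel₀ hπ h2
      exact_mod_cast this
    · rintro ⟨c, rfl⟩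
      exact ⟨c, by push_cast; field_simp⟩
  rw [Finset.sum_congr rfl (fun j _ => hpow j), Fin.sum_univ_eq_sum_range (fun i => z ^ i)]
  by_cases h : (m : ℤ) ∣ d
  · simp [h, hz1.mpr h]
  · rw [if_neg h, geom_sum_eq (fun h1 => h (hz1.mp h1)), hzm]
    simp

/-- The Golomb ruler `g k = 2pk + (k² mod p)`. -/
def gg (p : ℕ) (k : Fin p) : ℕ := 2 * p * k + k.val ^ 2 % p

lemma gg_lt (p : ℕ) (hp : 0 < p) (k : Fin p) : gg p k < 2 * p ^ 2 := by
  have h1 : k.val ^ 2 % p < p := Nat.mod_lt _ hp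
  have h2 : k.val < p := k.isLt
  simp only [gg]
  nlinarith

lemma gg_sum_lt (p m : ℕ) (hp3 : 3 ≤ p) (hm : m = 6 * p ^ 2 - 6 * p + 1) (k k' : Fin p) :
    gg p k + gg p k' < m := by
  have hp : 0 < p := by omega
  have h1 := gg_lt p hp k
  have h2 := gg_lt p hp k'
  have hq : 3 * p ≤ p ^ 2 := by nlinarith
  set q := p ^ 2
  omega

lemma sidon (p : ℕ) (hp : p.Prime) (hp3 : 3 ≤ p) {k k' l l' : Fin p}
    (h : gg p k + gg p k' = gg p l + gg p l') : (l = k ∧ l' = k') ∨ (l = k' ∧ l' = k) := by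
  haveI : Fact p.Prime := ⟨hp⟩
  have hp0 : 0 < p := hp.pos
  have rk := Nat.mod_lt (k.val ^ 2) hp0
  have rk' := Nat.mod_lt (k'.val ^ 2) hp0
  have rl := Nat.mod_lt (l.val ^ 2) hp0
  have rl' := Nat.mod_lt (l'.val ^ 2) hp0
  have h' : 2 * p * (k.val + k'.val) + (k.val ^ 2 % p + k'.val ^ 2 % p)
      = 2 * p * (l.val + l'.val) + (l.val ^ 2 % p + l'.val ^ 2 % p) := by
    simp only [gg, Nat.mul_add] at h ⊢
    linarith
  have hmod : (k.val ^ 2 % p + k'.val ^ 2 % p) = (l.val ^ 2 % p + l'.val ^ 2 % p) := by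
    have e1 : (2 * p * (k.val + k'.val) + (k.val ^ 2 % p + k'.val ^ 2 % p)) % (2 * p)
        = (k.val ^ 2 % p + k'.val ^ 2 % p) := by
      rw [Nat.mul_add_mod]
      exact Nat.mod_eq_of_lt (by omega)
    have e2 : (2 * p * (l.val + l'.val) + (l.val ^ 2 % p + l'.val ^ 2 % p)) % (2 * p)
        = (l.val ^ 2 % p + l'.val ^ 2 % p) := by
      rw [Nat.mul_add_mod]
      exact Nat.mod_eq_of_lt (by omega)
    rw [← e1, ← e2, h']
  have hsum : k.val + k'.val = l.val + l'.val := by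
    have h2 : 2 * p * (k.val + k'.val) = 2 * p * (l.val + l'.val) := by omega
    exact Nat.eq_of_mul_eq_mul_left (by omega) h2
  set K : ZMod p := (k.val : ZMod p) with hK
  set K' : ZMod p := (k'.val : ZMod p)
  set L : ZMod p := (l.val : ZMod p)
  set L' : ZMod p := (l'.val : ZMod p)
  have hS : K + K' = L + L' := by
    have := congrArg (fun n : ℕ => (n : ZMod p)) hsum
    push_cast at this
    simpa using this
  have hQ : K ^ 2 + K' ^ 2 = L ^ 2 + L' ^ 2 := by
    have := congrArg (fun n : ℕ => (n : ZMod p)) hmod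
    push_cast [ZMod.natCast_mod] at this
    simpa using this
  have h2ne : (2 : ZMod p) ≠ 0 := by
    intro h0
    have h0' : ((2 : ℕ) : ZMod p) = 0 := by exact_mod_cast h0
    rw [ZMod.natCast_eq_zero_iff] at h0'
    have := Nat.le_of_dvd (by norm_num) h0'
    omega
  have hprod : K * K' = L * L' := by
    have h2 : (2 : ZMod p) * (K * K') = 2 * (L * L') := by
      linear_combination (K + K' + L + L') * hS - hQ
    exact mul_left_cancel₀ h2ne h2
  have hzero : (L - K) * (L - K') = 0 := by
    linear_combination (-L) * hS + hprod
  have inj : ∀ a b : Fin p, ((a.val : ZMod p) = (b.val : ZMod p)) → a = b := by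
    intro a b hab
    have := congrArg ZMod.val hab
    rw [ZMod.val_cast_of_lt a.isLt, ZMod.val_cast_of_lt b.isLt] at this
    exact Fin.ext this
  rcases mul_eq_zero.mp hzero with h0 | h0
  · left
    have hlk : l = k := inj l k (by rwa [sub_eq_zero] at h0)
    have hv : l.val = k.val := congrArg Fin.val hlk
    exact ⟨hlk, Fin.ext (by omega)⟩
  · right
    have hlk : l = k' := inj l k' (by rwa [sub_eq_zero] at h0)
    have hv : l.val = k'.val := congrArg Fin.val hlk
    exact ⟨hlk, Fin.ext (by omega)⟩

lemma quad_sum {n : ℕ} (c : ℂ) (v : Fin n → ℂ) :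
    ∑ k, ∑ k', ∑ l, ∑ l', (v k * v k' * (starRingEnd ℂ) (v l) * (starRingEnd ℂ) (v l')) *
      (if (l = k ∧ l' = k') ∨ (l = k' ∧ l' = k) then c else 0)
    = 2 * c * (∑ k, v k * (starRingEnd ℂ) (v k)) ^ 2 - c * ∑ k, (v k * (starRingEnd ℂ) (v k)) ^ 2 := by
  have key : ∀ k k' l l' : Fin n, (if (l = k ∧ l' = k') ∨ (l = k' ∧ l' = k) then c else 0) =
      (if l = k then (1:ℂ) else 0) * (if l' = k' then 1 else 0) * c
      + (if l = k' then (1:ℂ) else 0) * (if l' = k then 1 else 0) * c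
      - (if k = k' then (1:ℂ) else 0) * ((if l = k then (1:ℂ) else 0) * (if l' = k' then 1 else 0)) * c := by
    intro k k' l l'
    by_cases h1 : l = k <;> by_cases h2 : l' = k' <;> by_cases h3 : l = k' <;>
      by_cases h4 : l' = k <;> simp_all
  simp only [key, mul_add, mul_sub, Finset.sum_add_distrib, Finset.sum_sub_distrib]
  simp only [mul_ite, mul_one, mul_zero, ite_mul, zero_mul, one_mul,
    Finset.sum_ite_eq', Finset.mem_univ, if_true]
  rw [sq, Finset.sum_mul_sum]
  simp only [Finset.mul_sum, Finset.sum_mul]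
  congr 1
  · rw [← Finset.sum_add_distrib]
    refine Finset.sum_congr rfl fun k _ => ?_
    rw [← Finset.sum_add_distrib]
    refine Finset.sum_congr rfl fun k' _ => ?_
    ring
  · simp only [Finset.sum_ite_eq, Finset.mem_univ, if_true]
    refine Finset.sum_congr rfl fun k _ => ?_
    ring

/-- For prime `p ≥ 3`, `m = 6p²-6p+1`, the Golomb-ruler matrix
`A''_{j,k} = exp(2πi j g(k)/m)` with `g k = 2pk + (k² mod p)` satisfies
`‖A''x‖₂² = m ‖x‖₂²` and `‖A''x‖₄⁴ = 2m ‖x‖₂⁴ - m ‖x‖₄⁴`. -/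
theorem stmt5 (p : ℕ) (hp : p.Prime) (hp3 : 3 ≤ p) (m : ℕ) (hm : m = 6 * p ^ 2 - 6 * p + 1)
    (A : Matrix (Fin m) (Fin p) ℂ)
    (hA : ∀ (j : Fin m) (k : Fin p),
      A j k = Complex.exp (2 * (Real.pi : ℂ) * Complex.I *
        ((j : ℕ) * (2 * p * (k : ℕ) + (k : ℕ) ^ 2 % p) : ℕ) / (m : ℕ)))
    (x : Fin p → ℂ) :
    (∑ j, ‖A.mulVec x j‖ ^ 2) = m * ∑ k, ‖x k‖ ^ 2 ∧
    (∑ j, ‖A.mulVec x j‖ ^ 4) = 2 * m * (∑ k, ‖x k‖ ^ 2) ^ 2 - m * ∑ k, ‖x k‖ ^ 4 := by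
  have hp0 : 0 < p := hp.pos
  have hm0 : 0 < m := by
    have : 6 * p ≤ 6 * p ^ 2 := by nlinarith
    omega
  -- rewrite the matrix entries via FF
  have hA' : ∀ (j : Fin m) (k : Fin p), A j k = FF m j (gg p k) := by
    intro j k
    rw [hA, FF]
    congr 1
    rw [show (2 * p * (k : ℕ) + (k : ℕ) ^ 2 % p) = gg p k from rfl]
    push_cast
    ring
  have hy : ∀ j, A.mulVec x j = ∑ k, x k * FF m j (gg p k) := by
    intro j
    simp only [Matrix.mulVec, dotProduct]
    exact Finset.sum_congr rfl fun k _ => by simp only [hA']; ring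
  have hconj : ∀ j, (starRingEnd ℂ) (A.mulVec x j)
      = ∑ l, (starRingEnd ℂ) (x l) * FF m j (-(gg p l : ℤ)) := by
    intro j
    rw [hy, map_sum]
    exact Finset.sum_congr rfl fun l _ => by rw [map_mul, FF_conj]
  -- divisibility criteria
  have hdvd2 : ∀ k l : Fin p, ((m : ℤ) ∣ ((gg p k : ℤ) - (gg p l : ℤ))) ↔ k = l := by
    intro k l
    constructor
    · intro hd
      have b1 := gg_sum_lt p m hp3 hm k k
      have b2 := gg_sum_lt p m hp3 hm l l
      have h0 : ((gg p k : ℤ) - (gg p l : ℤ)) = 0 :=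
        Int.eq_zero_of_abs_lt_dvd hd (by rw [abs_lt]; constructor <;> [omega; omega])
      have : gg p k = gg p l := by omega
      rcases sidon p hp hp3 (k := k) (k' := k) (l := l) (l' := l) (by omega) with ⟨h1, _⟩ | ⟨h1, _⟩ <;>
        exact h1.symm
    · rintro rfl; simp
  have hdvd4 : ∀ k k' l l' : Fin p,
      ((m : ℤ) ∣ (((gg p k : ℤ) + (gg p k' : ℤ)) - ((gg p l : ℤ) + (gg p l' : ℤ))))
        ↔ ((l = k ∧ l' = k') ∨ (l = k' ∧ l' = k)) := by
    intro k k' l l'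
    constructor
    · intro hd
      have b1 := gg_sum_lt p m hp3 hm k k'
      have b2 := gg_sum_lt p m hp3 hm l l'
      have h0 : (((gg p k : ℤ) + (gg p k' : ℤ)) - ((gg p l : ℤ) + (gg p l' : ℤ))) = 0 :=
        Int.eq_zero_of_abs_lt_dvd hd (by rw [abs_lt]; constructor <;> [omega; omega])
      exact sidon p hp hp3 (by omega)
    · rintro (⟨rfl, rfl⟩ | ⟨rfl, rfl⟩) <;> exact ⟨0, by ring⟩
  -- the ℓ² identity, complex form
  have S2 : ∑ j, (A.mulVec x j * (starRingEnd ℂ) (A.mulVec x j))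
      = (m : ℂ) * ∑ k, x k * (starRingEnd ℂ) (x k) := by
    calc ∑ j, (A.mulVec x j * (starRingEnd ℂ) (A.mulVec x j))
        = ∑ j, ∑ k, ∑ l, (x k * (starRingEnd ℂ) (x l)) * FF m j ((gg p k : ℤ) - (gg p l : ℤ)) := by
          refine Finset.sum_congr rfl fun j _ => ?_
          rw [hconj, hy, Finset.sum_mul_sum]
          refine Finset.sum_congr rfl fun k _ => Finset.sum_congr rfl fun l _ => ?_
          rw [mul_mul_mul_comm, FF_mul, ← sub_eq_add_neg]
      _ = ∑ k, ∑ l, (x k * (starRingEnd ℂ) (x l)) * ∑ j, FF m j ((gg p k : ℤ) - (gg p l : ℤ)) := by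
          rw [Finset.sum_comm]
          refine Finset.sum_congr rfl fun k _ => ?_
          rw [Finset.sum_comm]
          exact Finset.sum_congr rfl fun l _ => (Finset.mul_sum _ _ _).symm
      _ = ∑ k, ∑ l, (x k * (starRingEnd ℂ) (x l)) * (if k = l then (m : ℂ) else 0) := by
          refine Finset.sum_congr rfl fun k _ => Finset.sum_congr rfl fun l _ => ?_
          rw [sum_FF m hm0, if_congr (hdvd2 k l) rfl rfl]
      _ = (m : ℂ) * ∑ k, x k * (starRingEnd ℂ) (x k) := by
          simp only [mul_ite, mul_zero, Finset.sum_ite_eq, Finset.mem_univ, if_true,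
            Finset.mul_sum]
          exact Finset.sum_congr rfl fun k _ => by ring
  -- the ℓ⁴ identity, complex form
  have S4 : ∑ j, (A.mulVec x j * (starRingEnd ℂ) (A.mulVec x j)) ^ 2
      = 2 * (m : ℂ) * (∑ k, x k * (starRingEnd ℂ) (x k)) ^ 2
        - (m : ℂ) * ∑ k, (x k * (starRingEnd ℂ) (x k)) ^ 2 := by
    calc ∑ j, (A.mulVec x j * (starRingEnd ℂ) (A.mulVec x j)) ^ 2
        = ∑ j, ∑ k, ∑ k', ∑ l, ∑ l',
            (x k * x k' * (starRingEnd ℂ) (x l) * (starRingEnd ℂ) (x l')) *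
            FF m j (((gg p k : ℤ) + (gg p k' : ℤ)) - ((gg p l : ℤ) + (gg p l' : ℤ))) := by
          refine Finset.sum_congr rfl fun j _ => ?_
          have e1 : A.mulVec x j * A.mulVec x j
              = ∑ k, ∑ k', (x k * x k') * FF m j ((gg p k : ℤ) + (gg p k' : ℤ)) := by
            rw [hy, Finset.sum_mul_sum]
            refine Finset.sum_congr rfl fun k _ => Finset.sum_congr rfl fun k' _ => ?_
            rw [mul_mul_mul_comm, FF_mul]
          have e2 : (starRingEnd ℂ) (A.mulVec x j) * (starRingEnd ℂ) (A.mulVec x j)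
              = ∑ l, ∑ l', ((starRingEnd ℂ) (x l) * (starRingEnd ℂ) (x l')) *
                  FF m j (-((gg p l : ℤ) + (gg p l' : ℤ))) := by
            rw [hconj, Finset.sum_mul_sum]
            refine Finset.sum_congr rfl fun l _ => Finset.sum_congr rfl fun l' _ => ?_
            rw [mul_mul_mul_comm, FF_mul]
            congr 1
            ring
          calc (A.mulVec x j * (starRingEnd ℂ) (A.mulVec x j)) ^ 2
              = (A.mulVec x j * A.mulVec x j) *
                ((starRingEnd ℂ) (A.mulVec x j) * (starRingEnd ℂ) (A.mulVec x j)) := by ring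
            _ = _ := by
                rw [e1, e2, Finset.sum_mul_sum]
                refine Finset.sum_congr rfl fun k _ => ?_
                refine Eq.trans (Finset.sum_congr rfl fun l _ => ?_) Finset.sum_comm
                rw [Finset.sum_mul_sum]
                refine Finset.sum_congr rfl fun k' _ => Finset.sum_congr rfl fun l' _ => ?_
                rw [mul_mul_mul_comm, FF_mul, ← sub_eq_add_neg]
                ring
      _ = ∑ k, ∑ k', ∑ l, ∑ l',
            (x k * x k' * (starRingEnd ℂ) (x l) * (starRingEnd ℂ) (x l')) *
            ∑ j, FF m j (((gg p k : ℤ) + (gg p k' : ℤ)) - ((gg p l : ℤ) + (gg p l' : ℤ))) := by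
          rw [Finset.sum_comm]
          refine Finset.sum_congr rfl fun k _ => ?_
          rw [Finset.sum_comm]
          refine Finset.sum_congr rfl fun k' _ => ?_
          rw [Finset.sum_comm]
          refine Finset.sum_congr rfl fun l _ => ?_
          rw [Finset.sum_comm]
          exact Finset.sum_congr rfl fun l' _ => (Finset.mul_sum _ _ _).symm
      _ = ∑ k, ∑ k', ∑ l, ∑ l',
            (x k * x k' * (starRingEnd ℂ) (x l) * (starRingEnd ℂ) (x l')) *
            (if (l = k ∧ l' = k') ∨ (l = k' ∧ l' = k) then (m : ℂ) else 0) := by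
          refine Finset.sum_congr rfl fun k _ => Finset.sum_congr rfl fun k' _ =>
            Finset.sum_congr rfl fun l _ => Finset.sum_congr rfl fun l' _ => ?_
          rw [sum_FF m hm0, if_congr (hdvd4 k k' l l') rfl rfl]
      _ = _ := quad_sum (m : ℂ) x
  -- pass from the complex identities to the real statements
  have cast2 : ∀ z : ℂ, ((‖z‖ : ℂ)) ^ 2 = z * (starRingEnd ℂ) z := by
    intro z
    rw [Complex.mul_conj]
    norm_cast
    simp [Complex.normSq_eq_norm_sq]
  have cast4 : ∀ z : ℂ, ((‖z‖ : ℂ)) ^ 4 = (z * (starRingEnd ℂ) z) ^ 2 := by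
    intro z
    rw [← cast2]
    ring
  constructor
  · have hc : (((∑ j, ‖A.mulVec x j‖ ^ 2) : ℝ) : ℂ) = (((m : ℝ) * ∑ k, ‖x k‖ ^ 2 : ℝ) : ℂ) := by
      push_cast
      simp only [cast2]
      exact S2
    exact_mod_cast hc
  · have hc : (((∑ j, ‖A.mulVec x j‖ ^ 4) : ℝ) : ℂ)
        = ((2 * (m : ℝ) * (∑ k, ‖x k‖ ^ 2) ^ 2 - (m : ℝ) * ∑ k, ‖x k‖ ^ 4 : ℝ) : ℂ) := by
      push_cast
      simp only [cast2, cast4]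
      exact S4
    exact_mod_cast hc
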